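/- If λ is a regular cardinal and Dl_λ holds, then λ^{<λ} = λ. -/

import Mathlib

/-- `C` is a closed unbounded subset of the ordinal interval below `o`. -/
def IsClubIn (C : Set Ordinal) (o : Ordinal) : Prop :=
  (∀ a < o, ∃ b ∈ C, a ≤ b ∧ b < o) ∧
  (∀ a < o, a ≠ 0 → (∀ b < a, ∃ c ∈ C, b ≤ c ∧ c < a) → a ∈ C)

/-- `S` is stationary below `o`: it meets every club below `o`. -/
def IsStatIn (S : Set Ordinal) (o : Ordinal) : Prop :=
  ∀ C, IsClubIn C o → (S ∩ C).Nonempty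


/-- The principle `Dl_λ`: guessing families `𝒜_α ⊆ 𝒫(α)` of size `< λ`
which guess every `A ⊆ λ` stationarily often. -/
def DlCard (κ : Cardinal.{0}) : Prop :=
  ∃ 𝒜 : Ordinal → Set (Set Ordinal),
    (∀ α < Cardinal.ord κ, Cardinal.mk (𝒜 α) < Cardinal.lift.{1} κ ∧
      ∀ A ∈ 𝒜 α, A ⊆ Set.Iio α) ∧
    ∀ A : Set Ordinal, A ⊆ Set.Iio (Cardinal.ord κ) →
      IsStatIn {α | α < Cardinal.ord κ ∧ A ∩ Set.Iio α ∈ 𝒜 α} (Cardinal.ord κ)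

open Cardinal Set

/-- `Ici p` is club below a limit ordinal above `p`. -/
lemma isClubIn_Ici {p o : Ordinal} (hp : p < o) (ho : Order.IsSuccLimit o) :
    IsClubIn (Set.Ici p) o := by
  constructor
  · intro a ha
    exact ⟨max a p, Set.mem_Ici.2 (le_max_right _ _), le_max_left _ _, max_lt ha hp⟩
  · intro a _ ha0 h
    obtain ⟨c, hc, _, hca⟩ := h 0 (pos_iff_ne_zero.2 ha0)
    exact le_trans hc hca.le

/-- From `Dl κ`, every small powerset is bounded by `κ`. -/
lemma two_power_le_of_dl (κ : Cardinal.{0}) (hreg : κ.IsRegular) (hdl : DlCard κ)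
    {ν : Cardinal.{0}} (hν : ν < κ) : (2 : Cardinal.{0}) ^ ν ≤ κ := by
  obtain ⟨𝒜, h𝒜, hguess⟩ := hdl
  set o := κ.ord with ho
  set p := ν.ord with hp
  have hpo : p < o := Cardinal.ord_lt_ord.2 hν
  have holim : Order.IsSuccLimit o := Cardinal.isSuccLimit_ord hreg.aleph0_le
  -- every subset of `Iio p` is guessed
  have key : ∀ A : Set Ordinal, A ⊆ Set.Iio p → ∃ α : ↥(Set.Iio o), A ∈ 𝒜 α := by
    intro A hA
    have hA' : A ⊆ Set.Iio o := hA.trans fun x hx => lt_trans hx hpo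
    obtain ⟨α, ⟨hαo, hαmem⟩, hαp⟩ := hguess A hA' _ (isClubIn_Ici hpo holim)
    refine ⟨⟨α, hαo⟩, ?_⟩
    have : A ∩ Set.Iio α = A := by
      apply Set.inter_eq_self_of_subset_left
      exact hA.trans fun x hx => Set.mem_Iio.2 (lt_of_lt_of_le (Set.mem_Iio.1 hx) hαp)
    rwa [this] at hαmem
  -- build an injection from `Set ↥(Iio p)` into `Σ α : ↥(Iio o), ↥(𝒜 α)`
  choose idx hidx using key
  let Φ : Set ↥(Set.Iio p) → Σ α : ↥(Set.Iio o), ↥(𝒜 (α : Ordinal)) := fun S =>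
    ⟨idx (Subtype.val '' S) (by rintro x ⟨y, _, rfl⟩; exact y.2),
      ⟨Subtype.val '' S, hidx _ _⟩⟩
  have hΦ : Function.Injective Φ := by
    intro S₁ S₂ h
    have h2 : (Subtype.val '' S₁ : Set Ordinal) = Subtype.val '' S₂ := by
      have := congrArg (fun q : Σ α : ↥(Set.Iio o), ↥(𝒜 (α : Ordinal)) =>
        (q.2 : Set Ordinal)) h
      exact this
    exact Subtype.coe_injective.image_injective h2
  have hcard : #(Set ↥(Set.Iio p)) ≤ Cardinal.lift.{1} κ := by
    calc #(Set ↥(Set.Iio p)) ≤ #(Σ α : ↥(Set.Iio o), ↥(𝒜 (α : Ordinal))) :=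
          Cardinal.mk_le_of_injective hΦ
      _ = Cardinal.sum (fun α : ↥(Set.Iio o) => #(𝒜 (α : Ordinal))) := Cardinal.mk_sigma _
      _ ≤ Cardinal.sum (fun _ : ↥(Set.Iio o) => Cardinal.lift.{1} κ) :=
          Cardinal.sum_le_sum _ _ (fun α => ((h𝒜 α α.2).1).le)
      _ = #(↥(Set.Iio o)) * Cardinal.lift.{1} κ := Cardinal.sum_const' _ _
      _ = Cardinal.lift.{1} κ * Cardinal.lift.{1} κ := by
          rw [Ordinal.mk_Iio_ordinal, ho, Cardinal.card_ord]
      _ = Cardinal.lift.{1} κ := Cardinal.mul_eq_self (by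
          simpa using Cardinal.lift_le.{1}.2 hreg.aleph0_le)
  have hmk : #(Set ↥(Set.Iio p)) = Cardinal.lift.{1} ((2 : Cardinal.{0}) ^ ν) := by
    rw [Cardinal.mk_set, Ordinal.mk_Iio_ordinal, hp, Cardinal.card_ord,
      Cardinal.lift_power, Cardinal.lift_two]
  rw [hmk] at hcard
  exact Cardinal.lift_le.1 hcard

/-- If all small powersets are bounded by a regular `κ`, then so are all small powers of `κ`. -/
lemma pow_le_of_two_power_le (κ : Cardinal.{0}) (hreg : κ.IsRegular)
    (h2 : ∀ ν < κ, (2 : Cardinal.{0}) ^ ν ≤ κ) {μ : Cardinal.{0}} (hμ : μ < κ) :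
    κ ^ μ ≤ κ := by
  set o := κ.ord with ho
  have holim : Order.IsSuccLimit o := Cardinal.isSuccLimit_ord hreg.aleph0_le
  set T := μ.out with hT
  have hTmk : #T = μ := Cardinal.mk_out μ
  -- each `f : T → Iio o` is bounded
  have hbd : ∀ f : T → ↥(Set.Iio o), (⨆ t, ((f t : Ordinal) + 1)) < o := by
    intro f
    apply Cardinal.iSup_lt_ord_lift_of_isRegular hreg
    · simpa [hTmk] using hμ
    · intro t
      rw [Ordinal.add_one_eq_succ]
      exact holim.succ_lt (f t).2
  let Φ : (T → ↥(Set.Iio o)) →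
      Σ β : ↥(Set.Iio o), (T → ↥(Set.Iio (β : Ordinal))) := fun f =>
    ⟨⟨⨆ t, ((f t : Ordinal) + 1), hbd f⟩, fun t =>
      ⟨f t, lt_of_lt_of_le (lt_add_one _) (Ordinal.le_iSup (fun t => (f t : Ordinal) + 1) t)⟩⟩
  have hΦ : Function.Injective Φ := by
    intro f₁ f₂ h
    funext t
    apply Subtype.ext
    have := congrArg (fun q : Σ β : ↥(Set.Iio o), (T → ↥(Set.Iio (β : Ordinal))) =>
      ((q.2 t : Ordinal))) h
    simpa using this
  have hterm : ∀ β : ↥(Set.Iio o),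
      #(T → ↥(Set.Iio (β : Ordinal))) ≤ Cardinal.lift.{1} κ := by
    intro β
    have hcβ : ((β : Ordinal)).card < κ := by
      rw [← Cardinal.lt_ord]; exact β.2
    have hle : ((β : Ordinal)).card ^ μ ≤ κ := by
      calc ((β : Ordinal)).card ^ μ ≤ ((2 : Cardinal.{0}) ^ ((β : Ordinal)).card) ^ μ :=
            Cardinal.power_le_power_right (Cardinal.cantor _).le
        _ = (2 : Cardinal.{0}) ^ (((β : Ordinal)).card * μ) := (Cardinal.power_mul).symm
        _ ≤ κ := h2 _ (Cardinal.mul_lt_of_lt hreg.aleph0_le hcβ hμ)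
    calc #(T → ↥(Set.Iio (β : Ordinal)))
        = Cardinal.lift.{0} #(↥(Set.Iio (β : Ordinal))) ^ Cardinal.lift.{1} #T :=
          Cardinal.mk_arrow _ _
      _ = Cardinal.lift.{1} (((β : Ordinal)).card ^ μ) := by
          rw [Cardinal.lift_id', Ordinal.mk_Iio_ordinal, hTmk, Cardinal.lift_power]
      _ ≤ Cardinal.lift.{1} κ := Cardinal.lift_le.2 hle
  have hcard : #(T → ↥(Set.Iio o)) ≤ Cardinal.lift.{1} κ := by
    calc #(T → ↥(Set.Iio o)) ≤ #(Σ β : ↥(Set.Iio o), (T → ↥(Set.Iio (β : Ordinal)))) :=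
          Cardinal.mk_le_of_injective hΦ
      _ = Cardinal.sum (fun β : ↥(Set.Iio o) => #(T → ↥(Set.Iio (β : Ordinal)))) :=
          Cardinal.mk_sigma _
      _ ≤ Cardinal.sum (fun _ : ↥(Set.Iio o) => Cardinal.lift.{1} κ) :=
          Cardinal.sum_le_sum _ _ hterm
      _ = #(↥(Set.Iio o)) * Cardinal.lift.{1} κ := Cardinal.sum_const' _ _
      _ = Cardinal.lift.{1} κ * Cardinal.lift.{1} κ := by
          rw [Ordinal.mk_Iio_ordinal, ho, Cardinal.card_ord]
      _ = Cardinal.lift.{1} κ := Cardinal.mul_eq_self (by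
          simpa using Cardinal.lift_le.{1}.2 hreg.aleph0_le)
  have hmk : #(T → ↥(Set.Iio o)) = Cardinal.lift.{1} (κ ^ μ) := by
    rw [Cardinal.mk_arrow, Cardinal.lift_id', Ordinal.mk_Iio_ordinal, ho, Cardinal.card_ord,
      hTmk, Cardinal.lift_power]
  rw [hmk] at hcard
  exact Cardinal.lift_le.1 hcard

/-- If `λ` is regular and `Dl_λ` holds then `λ^{<λ} = λ`. -/
theorem dl_implies_powerlt (κ : Cardinal.{0}) (hreg : κ.IsRegular) (hdl : DlCard κ) :
    κ ^< κ = κ := by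
  apply le_antisymm
  · rw [Cardinal.powerlt_le]
    intro μ hμ
    exact pow_le_of_two_power_le κ hreg (fun ν hν => two_power_le_of_dl κ hreg hdl hν) hμ
  · have h1 : (1 : Cardinal) < κ := lt_of_lt_of_le Cardinal.one_lt_aleph0 hreg.aleph0_le
    simpa using Cardinal.le_powerlt κ h1
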